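/- Let G be an extended parity game with parity sequence α = F · α' where F is an even parity set. Then Win_1(G) equals the least fixed point μY.(Q \ Win_0(α', V ∪ (F \ Y), A ∪ (F ∩ Y))), where Win_0(β, V', A') denotes the winning region of Player 0 in the extended parity game with parity sequence β, visiting set V' and avoiding set A'. -/

import Mathlib

/-- A parity game: disjoint node sets for Player 0 (`Q0`) and Player 1 (`Q1`)
covering `Q`, a left-total move relation `R`, and a priority function `p`. -/
structure ParityGame (Q : Type) where
  Q0 : Set Q
  Q1 : Set Q
  disj : Disjoint Q0 Q1
  covers : Q0 ∪ Q1 = Set.univ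
  R : Q → Q → Prop
  total : ∀ q, ∃ q', R q q'
  p : Q → ℕ

namespace ParityGame

variable {Q : Type} (G : ParityGame Q)

/-- The nodes of player `i` (`false` = Player 0, `true` = Player 1). -/
def nodes (i : Bool) : Set Q := if i then G.Q1 else G.Q0

/-- An (infinite) play: a sequence of nodes agreeing with the move relation. -/
def IsPlay (π : ℕ → Q) : Prop := ∀ n, G.R (π n) (π (n + 1))

/-- The set of priorities occurring infinitely often along `π`. -/
def InfPrio (π : ℕ → Q) : Set ℕ := {c | ∀ N, ∃ n, N ≤ n ∧ G.p (π n) = c}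

/-- Player `i` wins play `π` iff the minimal priority occurring infinitely
often has parity `i` (even for Player 0, odd for Player 1). -/
def WinsPlay (i : Bool) (π : ℕ → Q) : Prop :=
  if i then Odd (sInf (G.InfPrio π)) else Even (sInf (G.InfPrio π))

/-- A strategy for player `i` maps (strict past history, current node) to a
successor; it is legal if it always chooses an `R`-successor at `i`'s nodes. -/
def Legal (i : Bool) (σ : List Q → Q → Q) : Prop :=
  ∀ h q, q ∈ G.nodes i → G.R q (σ h q)

/-- A play is consistent with a strategy `σ` of player `i` if at every node of
player `i` the next node is the one chosen by `σ` on the history so far. -/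
def Consistent (i : Bool) (σ : List Q → Q → Q) (π : ℕ → Q) : Prop :=
  ∀ n, π n ∈ G.nodes i → π (n + 1) = σ (List.ofFn (fun k : Fin n => π k)) (π n)

/-- The winning region of player `i`: nodes from which `i` has a legal strategy
all of whose consistent plays are winning for `i`. -/
def WinRegion (i : Bool) : Set Q :=
  {q | ∃ σ, G.Legal i σ ∧
    ∀ π, G.IsPlay π → π 0 = q → G.Consistent i σ π → G.WinsPlay i π}

/-- `force i X`: the nodes from which player `i` can force the next node
to be in `X`. -/
def force (i : Bool) (X : Set Q) : Set Q :=
  {q | q ∈ G.nodes i ∧ ∃ q' ∈ X, G.R q q'} ∪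
  {q | q ∈ G.nodes !i ∧ ∀ q', G.R q q' → q' ∈ X}

/-- Extended-parity-game winning condition for player `i`, with visiting set
`V` and avoiding set `A`: player `i` wins `π` iff (after the first position)
`π` hits its target set before the opponent's one, or `π` forever avoids
`V ∪ A` and satisfies `i`'s parity condition. -/
def EWinsPlay (i : Bool) (V A : Set Q) (π : ℕ → Q) : Prop :=
  (∃ n, 1 ≤ n ∧ π n ∈ (if i then A else V) ∧
    ∀ m, 1 ≤ m → m < n → π m ∉ (if i then V else A)) ∨
  ((∀ n, 1 ≤ n → π n ∉ V ∪ A) ∧ G.WinsPlay i π)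

/-- The winning region of player `i` in the extended parity game on `G` with
visiting set `V` and avoiding set `A`. -/
def EWinRegion (i : Bool) (V A : Set Q) : Set Q :=
  {q | ∃ σ, G.Legal i σ ∧
    ∀ π, G.IsPlay π → π 0 = q → G.Consistent i σ π → G.EWinsPlay i V A π}

end ParityGame

open ParityGame
namespace APT
open ParityGame

attribute [local instance] Classical.propDecidable

variable {Q : Type}

noncomputable def dflt (G : ParityGame Q) (q : Q) : Q := (G.total q).choose

lemma dflt_R (G : ParityGame Q) (q : Q) : G.R q (dflt G q) := (G.total q).choose_spec

lemma mem_nodes_other (G : ParityGame Q) {q : Q} {i : Bool} (h : q ∉ G.nodes i) :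
    G.nodes (!i) q := by
  have hq : q ∈ G.Q0 ∪ G.Q1 := by rw [G.covers]; trivial
  cases i with
  | false => simp only [nodes, if_false, Bool.not_false, if_true] at *
             rcases hq with h'|h' <;> tauto
  | true => simp only [nodes, if_false, Bool.not_true, if_true] at *
            rcases hq with h'|h' <;> tauto

lemma ofFn_append_last (π : ℕ → Q) (n : ℕ) :
    (List.ofFn fun k : Fin n => π k) ++ [π n] = List.ofFn fun k : Fin (n+1) => π k := by
  rw [List.ofFn_succ' (fun k : Fin (n+1) => π (k : ℕ))]
  simp [List.concat_eq_append]

lemma drop_ofFn (π : ℕ → Q) (n r : ℕ) (h : r ≤ n) :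
    (List.ofFn fun k : Fin n => π k).drop r = List.ofFn fun k : Fin (n - r) => π (r + k) := by
  apply List.ext_getElem
  · simp [Nat.sub_add_eq]
  · intro i h1 h2
    simp only [List.getElem_drop, List.getElem_ofFn]

lemma dropLast_ofFn (π : ℕ → Q) (n : ℕ) :
    (List.ofFn fun k : Fin (n+1) => π k).dropLast = List.ofFn fun k : Fin n => π k := by
  rw [← ofFn_append_last]
  simp

lemma getLastD_ofFn (π : ℕ → Q) (n : ℕ) (d : Q) :
    (List.ofFn fun k : Fin (n+1) => π k).getLastD d = π n := by
  rw [← ofFn_append_last]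
  simp

/-- Build a sequence from a "step" function on finite histories. -/
noncomputable def bp (step : List Q → Q) (q0 : Q) : ℕ → List Q
  | 0 => [q0]
  | n+1 => bp step q0 n ++ [step (bp step q0 n)]

noncomputable def bpf (step : List Q → Q) (q0 : Q) (n : ℕ) : Q :=
  (bp step q0 n).getLastD q0

lemma bpf_zero (step : List Q → Q) (q0 : Q) : bpf step q0 0 = q0 := rfl

lemma bp_eq_ofFn (step : List Q → Q) (q0 : Q) :
    ∀ n, bp step q0 n = List.ofFn fun k : Fin (n+1) => bpf step q0 k := by
  intro n
  induction n with
  | zero => simp [bp, bpf]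
  | succ n ih =>
    have hlast : bpf step q0 (n+1) = step (bp step q0 n) := by
      simp [bpf, bp]
    rw [bp, show step (bp step q0 n) = bpf step q0 (n+1) from hlast.symm, ih]
    exact ofFn_append_last (bpf step q0) (n+1)

lemma bpf_succ (step : List Q → Q) (q0 : Q) (n : ℕ) :
    bpf step q0 (n+1) = step (List.ofFn fun k : Fin (n+1) => bpf step q0 k) := by
  have : bpf step q0 (n+1) = step (bp step q0 n) := by simp [bpf, bp]
  rw [this, bp_eq_ofFn]

/-- Consistency with a strategy up to stage `m`. -/
def ConsUpTo (G : ParityGame Q) (i : Bool) (σ : List Q → Q → Q) (π : ℕ → Q) (m : ℕ) : Prop :=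
  ∀ k, k < m → π k ∈ G.nodes i →
    π (k+1) = σ (List.ofFn fun j : Fin k => π j) (π k)

lemma consistent_of_upto {G : ParityGame Q} {i σ π}
    (h : ∀ m, ConsUpTo G i σ π m) : G.Consistent i σ π :=
  fun n hn => h (n+1) n (Nat.lt_succ_self n) hn

lemma upto_of_consistent {G : ParityGame Q} {i σ π}
    (h : G.Consistent i σ π) (m : ℕ) : ConsUpTo G i σ π m :=
  fun k _ hk => h k hk

/-- Any play consistent with `σ` up to `N` extends to a fully `σ`-consistent play. -/
lemma exists_ext (G : ParityGame Q) (i : Bool) (σ : List Q → Q → Q) (τ : ℕ → Q) (N : ℕ)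
    (hleg : G.Legal i σ) (hp : G.IsPlay τ) (hc : ConsUpTo G i σ τ N) :
    ∃ τ', G.IsPlay τ' ∧ G.Consistent i σ τ' ∧ ∀ k ≤ N, τ' k = τ k := by
  set step : List Q → Q := fun l =>
    if l.length ≤ N then τ l.length
    else (if l.getLastD (τ 0) ∈ G.nodes i then σ l.dropLast (l.getLastD (τ 0))
          else dflt G (l.getLastD (τ 0))) with hstep
  set τ' := bpf step (τ 0) with hτ'
  have hofn : ∀ n, bp step (τ 0) n = List.ofFn fun k : Fin (n+1) => τ' k := bp_eq_ofFn step (τ 0)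
  have hagree : ∀ k, k ≤ N → τ' k = τ k := by
    intro k hk
    match k with
    | 0 => simp [hτ', bpf_zero]
    | (k+1) =>
      rw [hτ', bpf_succ, hstep]
      simp only [List.length_ofFn, if_pos hk]
  have hlastD : ∀ n, (List.ofFn fun k : Fin (n+1) => τ' k).getLastD (τ 0) = τ' n :=
    fun n => getLastD_ofFn τ' n (τ 0)
  have hsucc : ∀ n, τ' (n+1) = step (List.ofFn fun k : Fin (n+1) => τ' k) :=
    fun n => bpf_succ step (τ 0) n
  refine ⟨τ', ?_, ?_, hagree⟩
  · intro n
    rw [hsucc n, hstep]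
    simp only [List.length_ofFn]
    by_cases hle : n + 1 ≤ N
    · rw [if_pos hle, hagree n (Nat.le_of_succ_le hle)]
      exact hp n
    · rw [if_neg hle, hlastD]
      by_cases hn : τ' n ∈ G.nodes i
      · rw [if_pos hn]; exact hleg _ _ hn
      · rw [if_neg hn]; exact dflt_R G _
  · intro n hn
    by_cases hle : n + 1 ≤ N
    · have h1 : τ' (n+1) = τ (n+1) := hagree _ hle
      have h2 : τ' n = τ n := hagree _ (Nat.le_of_succ_le hle)
      have h3 : ∀ j : Fin n, τ' j = τ j := fun j =>
        hagree _ (le_trans (Nat.le_of_lt j.2) (Nat.le_of_succ_le hle))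
      have hn' : τ n ∈ G.nodes i := by rw [← h2]; exact hn
      rw [h1, hc n (Nat.lt_of_succ_le hle) hn', h2]
      congr 1
      exact congrArg List.ofFn (funext fun j => (h3 j).symm)
    · rw [hsucc n, hstep]
      simp only [List.length_ofFn, if_neg hle, hlastD, if_pos hn]
      rw [dropLast_ofFn]

/-- Pit a strategy of player 0 against a strategy of player 1. -/
lemma playoff (G : ParityGame Q) (σ τ : List Q → Q → Q)
    (hσ : G.Legal false σ) (hτ : G.Legal true τ) (q0 : Q) :
    ∃ π, G.IsPlay π ∧ π 0 = q0 ∧ G.Consistent false σ π ∧ G.Consistent true τ π := by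
  set step : List Q → Q := fun l =>
    if l.getLastD q0 ∈ G.nodes false then σ l.dropLast (l.getLastD q0)
    else τ l.dropLast (l.getLastD q0) with hstep
  set π := bpf step q0 with hπ
  have hsucc : ∀ n, π (n+1) = step (List.ofFn fun k : Fin (n+1) => π k) :=
    fun n => bpf_succ step q0 n
  have hlastD : ∀ n, (List.ofFn fun k : Fin (n+1) => π k).getLastD q0 = π n :=
    fun n => getLastD_ofFn π n q0
  refine ⟨π, ?_, bpf_zero step q0, ?_, ?_⟩
  · intro n
    rw [hsucc n, hstep]
    simp only [hlastD]
    by_cases hn : π n ∈ G.nodes false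
    · rw [if_pos hn]; exact hσ _ _ hn
    · rw [if_neg hn]
      exact hτ _ _ (mem_nodes_other G hn)
  · intro n hn
    rw [hsucc n, hstep]
    simp only [hlastD, if_pos hn, dropLast_ofFn]
  · intro n hn
    have hn0 : π n ∉ G.nodes false := by
      simp only [nodes, if_true, if_false] at *
      exact fun h => Set.disjoint_left.mp G.disj h hn
    rw [hsucc n, hstep]
    simp only [hlastD, if_neg hn0, dropLast_ofFn]

/-- The two players cannot both win the same play. -/
lemma not_both (G : ParityGame Q) {V A : Set Q} (hVA : Disjoint V A) (π : ℕ → Q)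
    (h0 : G.EWinsPlay false V A π) (h1 : G.EWinsPlay true V A π) : False := by
  simp only [EWinsPlay, WinsPlay, Bool.false_eq_true, if_true, if_false, ite_true, ite_false] at h0 h1
  rcases h0 with ⟨n0, hn0, hV, havA⟩ | ⟨hav0, hpar0⟩
  · rcases h1 with ⟨n1, hn1, hA, havV⟩ | ⟨hav1, _⟩
    · rcases lt_trichotomy n0 n1 with h | h | h
      · exact havV n0 hn0 h hV
      · exact Set.disjoint_left.mp hVA hV (h ▸ hA)
      · exact havA n1 hn1 h hA
    · exact hav1 n0 hn0 (Set.mem_union_left _ hV)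
  · rcases h1 with ⟨n1, hn1, hA, _⟩ | ⟨_, hpar1⟩
    · exact hav0 n1 hn1 (Set.mem_union_right _ hA)
    · exact (Nat.not_odd_iff_even.mpr hpar0) hpar1

lemma regions_not_both (G : ParityGame Q) {V A : Set Q} (hVA : Disjoint V A) (q : Q)
    (h0 : q ∈ G.EWinRegion false V A) (h1 : q ∈ G.EWinRegion true V A) : False := by
  obtain ⟨σ, hσl, hσw⟩ := h0
  obtain ⟨τ, hτl, hτw⟩ := h1
  obtain ⟨π, hp, h0', hcσ, hcτ⟩ := playoff G σ τ hσl hτl q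
  exact not_both G hVA π (hσw π hp h0' hcσ) (hτw π hp h0' hcτ)

lemma infPrio_nonempty (G : ParityGame Q) [Fintype Q] (π : ℕ → Q) :
    (G.InfPrio π).Nonempty := by
  obtain ⟨q, hq⟩ := Finite.exists_infinite_fiber π
  refine ⟨G.p q, fun N => ?_⟩
  have hinf : (π ⁻¹' {q}).Infinite := Set.infinite_coe_iff.mp hq
  have : ∃ n ∈ (π ⁻¹' {q} : Set ℕ), N ≤ n := by
    by_contra h
    push_neg at h
    exact hinf ((Set.finite_Iio N).subset (fun x hx => h x hx))
  obtain ⟨n, hn, hNn⟩ := this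
  exact ⟨n, hNn, by simpa using congrArg G.p hn⟩

lemma infPrio_shift (G : ParityGame Q) (π : ℕ → Q) (r : ℕ) :
    G.InfPrio (fun k => π (r+k)) = G.InfPrio π := by
  ext c
  constructor
  · intro h N
    obtain ⟨k, hk, hv⟩ := h N
    exact ⟨r + k, le_trans hk (Nat.le_add_left k r), hv⟩
  · intro h N
    obtain ⟨n, hn, hv⟩ := h (N + r)
    refine ⟨n - r, ?_, ?_⟩
    · omega
    · show G.p (π (r + (n - r))) = c
      have : r + (n - r) = n := by omega
      rw [this]; exact hv

lemma winsPlay_shift (G : ParityGame Q) (i : Bool) (π : ℕ → Q) (r : ℕ) :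
    G.WinsPlay i (fun k => π (r+k)) ↔ G.WinsPlay i π := by
  unfold WinsPlay
  rw [infPrio_shift]

end APT
namespace APT
open ParityGame

variable {Q : Type}

lemma getD_ofFn (π : ℕ → Q) (n i : ℕ) (d : Q) (h : i < n) :
    (List.ofFn fun k : Fin n => π k).getD i d = π i := by
  rw [List.getD_eq_getElem _ _ (by simpa using h)]
  simp

lemma drop_ofFn' (π : ℕ → Q) (r m : ℕ) :
    (List.ofFn fun k : Fin (r + m) => π k).drop r = List.ofFn fun k : Fin m => π (r + k) := by
  apply List.ext_getElem
  · simp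
  · intro i h1 h2
    simp only [List.getElem_drop, List.getElem_ofFn]

/-- The last "restart" index of a history: the largest index `i ≥ 1` whose entry
is in `F` (`0` if there is none). -/
noncomputable def lastR (F : Set Q) (l : List Q) (d : Q) : ℕ :=
  sSup {i | 1 ≤ i ∧ i < l.length ∧ l.getD i d ∈ F}

/-- Strategy composition: at each stage, apply the strategy `t x` where `x` is the
node at the last restart index, fed with the history since that index. -/
noncomputable def compose (F : Set Q) (t : Q → List Q → Q → Q) : List Q → Q → Q :=
  fun h q =>
    t ((h ++ [q]).getD (lastR F (h ++ [q]) q) q)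
      (h.drop (lastR F (h ++ [q]) q)) q

lemma compose_legal (G : ParityGame Q) (F : Set Q) (i : Bool) (t : Q → List Q → Q → Q)
    (ht : ∀ x, G.Legal i (t x)) : G.Legal i (compose F t) :=
  fun h q hq => ht _ _ q hq

lemma lastR_eq (F : Set Q) (π : ℕ → Q) (n r : ℕ) (d : Q)
    (hr : r = 0 ∨ (1 ≤ r ∧ π r ∈ F)) (hrn : r ≤ n)
    (hnoF : ∀ j, r < j → j ≤ n → π j ∉ F) :
    lastR F (List.ofFn fun k : Fin (n+1) => π k) d = r := by
  have hget : ∀ i, i ≤ n → (List.ofFn fun k : Fin (n+1) => π k).getD i d = π i :=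
    fun i hi => getD_ofFn π (n+1) i d (Nat.lt_succ_of_le hi)
  set S := {i | 1 ≤ i ∧ i < (List.ofFn fun k : Fin (n+1) => π k).length ∧
    (List.ofFn fun k : Fin (n+1) => π k).getD i d ∈ F} with hS
  have hmemS : ∀ i, i ∈ S ↔ (1 ≤ i ∧ i ≤ n ∧ π i ∈ F) := by
    intro i
    constructor
    · rintro ⟨h1, h2, h3⟩
      have hin : i ≤ n := by simpa using Nat.lt_succ_iff.mp (by simpa using h2)
      exact ⟨h1, hin, by rwa [hget i hin] at h3⟩
    · rintro ⟨h1, h2, h3⟩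
      exact ⟨h1, by simpa using Nat.lt_succ_of_le h2, by rwa [hget i h2]⟩
  rcases hr with hr0 | ⟨hr1, hrF⟩
  · have hempty : S = ∅ := by
      ext i
      simp only [Set.mem_empty_iff_false, iff_false]
      intro hi
      obtain ⟨h1, h2, h3⟩ := (hmemS i).mp hi
      exact hnoF i (by omega) h2 h3
    rw [lastR, ← hS, hempty, csSup_empty, hr0]
    rfl
  · have hrS : r ∈ S := (hmemS r).mpr ⟨hr1, hrn, hrF⟩
    have hub : ∀ i ∈ S, i ≤ r := by
      intro i hi
      obtain ⟨h1, h2, h3⟩ := (hmemS i).mp hi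
      by_contra hgt
      exact hnoF i (by omega) h2 h3
    rw [lastR, ← hS]
    exact le_antisymm (csSup_le ⟨r, hrS⟩ hub) (le_csSup ⟨r, hub⟩ hrS)

/-- A play consistent with a composed strategy is, on each restart-free segment,
consistent with the strategy of the last restart node. -/
lemma seg_upto (G : ParityGame Q) (F : Set Q) (i : Bool) (t : Q → List Q → Q → Q)
    (π : ℕ → Q) (hc : G.Consistent i (compose F t) π)
    (r m : ℕ) (hr : r = 0 ∨ (1 ≤ r ∧ π r ∈ F))
    (hnoF : ∀ j, r < j → j < r + m → π j ∉ F) :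
    ConsUpTo G i (t (π r)) (fun k => π (r + k)) m := by
  intro k hk hmem
  have hstep := hc (r + k) hmem
  rw [compose] at hstep
  rw [ofFn_append_last π (r+k)] at hstep
  rw [lastR_eq F π (r+k) r (π (r+k)) hr (Nat.le_add_right r k)
    (fun j hj1 hj2 => hnoF j hj1 (by omega))] at hstep
  rw [getD_ofFn π (r+k+1) r (π (r+k)) (by omega)] at hstep
  rw [drop_ofFn' π r k] at hstep
  exact hstep

lemma seg_consistent (G : ParityGame Q) (F : Set Q) (i : Bool) (t : Q → List Q → Q → Q)
    (π : ℕ → Q) (hc : G.Consistent i (compose F t) π)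
    (r : ℕ) (hr : r = 0 ∨ (1 ≤ r ∧ π r ∈ F))
    (hnoF : ∀ j, r < j → π j ∉ F) :
    G.Consistent i (t (π r)) (fun k => π (r + k)) :=
  consistent_of_upto fun m => seg_upto G F i t π hc r m hr (fun j hj _ => hnoF j hj)

/-- Segment guarantee: if the last-restart strategy wins from the restart node,
there is a winning play agreeing with `π` on the whole segment. -/
lemma seg_win (G : ParityGame Q) (F : Set Q) (i : Bool) (t : Q → List Q → Q → Q)
    (π : ℕ → Q) (hp : G.IsPlay π) (hc : G.Consistent i (compose F t) π)
    (r m : ℕ) (hr : r = 0 ∨ (1 ≤ r ∧ π r ∈ F))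
    (hnoF : ∀ j, r < j → j < r + m → π j ∉ F)
    (hleg : G.Legal i (t (π r))) {W X : Set Q}
    (hwin : ∀ τ, G.IsPlay τ → τ 0 = π r → G.Consistent i (t (π r)) τ →
      G.EWinsPlay i W X τ) :
    ∃ τ', G.EWinsPlay i W X τ' ∧ ∀ k ≤ m, τ' k = π (r + k) := by
  have hup := seg_upto G F i t π hc r m hr hnoF
  obtain ⟨τ', hp', hc', hag⟩ := exists_ext G i (t (π r)) (fun k => π (r+k)) m hleg
    (fun k => hp (r+k)) hup
  have h0 : τ' 0 = π r := by
    have := hag 0 (Nat.zero_le m)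
    simpa using this
  exact ⟨τ', hwin τ' hp' h0 hc', hag⟩

lemma tail_win (G : ParityGame Q) (F : Set Q) (i : Bool) (t : Q → List Q → Q → Q)
    (π : ℕ → Q) (hp : G.IsPlay π) (hc : G.Consistent i (compose F t) π)
    (r : ℕ) (hr : r = 0 ∨ (1 ≤ r ∧ π r ∈ F))
    (hnoF : ∀ j, r < j → π j ∉ F) {W X : Set Q}
    (hwin : ∀ τ, G.IsPlay τ → τ 0 = π r → G.Consistent i (t (π r)) τ →
      G.EWinsPlay i W X τ) :
    G.EWinsPlay i W X (fun k => π (r + k)) :=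
  hwin _ (fun k => hp (r+k)) (by simp) (seg_consistent G F i t π hc r hr hnoF)

/-- Winning a game with a smaller target, a larger avoid-set, and the same union
implies winning the relaxed game (same strategy). -/
lemma ewins_mono (G : ParityGame Q) (i : Bool) {V1 A1 V2 A2 : Set Q}
    (hT : (if i then A1 else V1) ⊆ (if i then A2 else V2))
    (hO : (if i then V2 else A2) ⊆ (if i then V1 else A1))
    (hU : V1 ∪ A1 = V2 ∪ A2) (π : ℕ → Q)
    (h : G.EWinsPlay i V1 A1 π) : G.EWinsPlay i V2 A2 π := by
  rcases h with ⟨n, hn, hT', hav⟩ | ⟨hav, hw⟩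
  · exact Or.inl ⟨n, hn, hT hT', fun m h1 h2 hm => hav m h1 h2 (hO hm)⟩
  · exact Or.inr ⟨fun n hn => by rw [← hU]; exact hav n hn, hw⟩

lemma region_mono (G : ParityGame Q) (i : Bool) {V1 A1 V2 A2 : Set Q}
    (hT : (if i then A1 else V1) ⊆ (if i then A2 else V2))
    (hO : (if i then V2 else A2) ⊆ (if i then V1 else A1))
    (hU : V1 ∪ A1 = V2 ∪ A2) :
    G.EWinRegion i V1 A1 ⊆ G.EWinRegion i V2 A2 := by
  rintro q ⟨σ, hl, hw⟩
  exact ⟨σ, hl, fun π h1 h2 h3 => ewins_mono G i hT hO hU π (hw π h1 h2 h3)⟩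

lemma union_VbAb (V A F Y : Set Q) : (V ∪ (F \ Y)) ∪ (A ∪ (F ∩ Y)) = V ∪ A ∪ F := by
  ext x
  simp only [Set.mem_union, Set.mem_diff, Set.mem_inter_iff]
  tauto

lemma disj_VbAb {V A F : Set Q} (hVA : Disjoint V A) (hF : ∀ x ∈ F, x ∉ V ∪ A)
    (Y : Set Q) : Disjoint (V ∪ (F \ Y)) (A ∪ (F ∩ Y)) := by
  rw [Set.disjoint_left]
  rintro x (hx | hx) (hy | hy)
  · exact Set.disjoint_left.mp hVA hx hy
  · exact hF x hy.1 (Or.inl hx)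
  · exact hF x hx.1 (Or.inr hy)
  · exact hx.2 hy.2

lemma mono_f (G : ParityGame Q) (V A F : Set Q) :
    Monotone (fun Y : Set Q => (G.EWinRegion false (V ∪ (F \ Y)) (A ∪ (F ∩ Y)))ᶜ) := by
  intro Y Y' hYY'
  apply Set.compl_subset_compl.mpr
  apply region_mono G false
  · simp only [if_neg Bool.false_ne_true]
    exact Set.union_subset_union_right V (Set.diff_subset_diff_right hYY')
  · simp only [if_neg Bool.false_ne_true]
    exact Set.union_subset_union_right A (Set.inter_subset_inter_right F hYY')
  · rw [union_VbAb, union_VbAb]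

end APT
namespace APT
open ParityGame

variable {Q : Type}

/-- Construction A: Player 0 wins (the original game) from the complement of the
least fixed point, by composing winning strategies of the fixed-point subgame,
restarting whenever `F` is hit. -/
lemma lemA (G : ParityGame Q) [Fintype Q] (V A : Set Q) (hVA : Disjoint V A)
    (d : ℕ) (hd : Even d) (hmin : ∀ q, q ∉ V ∪ A → d ≤ G.p q)
    (F : Set Q) (hF : F = {q | q ∉ V ∪ A ∧ G.p q = d})
    (f : Set Q →o Set Q)
    (hf : ∀ Y, f Y = (G.EWinRegion false (V ∪ (F \ Y)) (A ∪ (F ∩ Y)))ᶜ) :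
    (OrderHom.lfp f : Set Q)ᶜ ⊆ G.EWinRegion false V A := by
  classical
  set L := (OrderHom.lfp f : Set Q) with hL
  have hFfree : ∀ x ∈ F, x ∉ V ∪ A := by
    intro x hx; rw [hF] at hx; exact hx.1
  set W := G.EWinRegion false (V ∪ (F \ L)) (A ∪ (F ∩ L)) with hW
  have hkey : Lᶜ = W := by
    have h1 : f L = L := OrderHom.map_lfp f
    conv_lhs => rw [← h1]
    rw [hf L, compl_compl, hW]
  have tdef : ∀ x : Q, ∃ σ, G.Legal false σ ∧ (x ∈ W → ∀ π, G.IsPlay π → π 0 = x →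
      G.Consistent false σ π → G.EWinsPlay false (V ∪ (F \ L)) (A ∪ (F ∩ L)) π) := by
    intro x
    by_cases hx : x ∈ W
    · obtain ⟨σ, h1, h2⟩ := hx
      exact ⟨σ, h1, fun _ => h2⟩
    · exact ⟨fun _ q => dflt G q, fun _ q _ => dflt_R G q, fun h => absurd h hx⟩
  choose t tleg twin using tdef
  intro q0 hq0
  refine ⟨compose F t, compose_legal G F false t tleg, ?_⟩
  intro π hp h0 hc
  -- membership in W at restart points
  have hmemW : ∀ r, (r = 0 ∨ (1 ≤ r ∧ π r ∈ F ∧ π r ∉ L)) → π r ∈ W := by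
    rintro r (rfl | ⟨_, _, hnL⟩)
    · rw [h0, ← hkey]; exact hq0
    · rw [← hkey]; exact hnL
  -- the invariant
  have INV : ∀ n, 1 ≤ n → (∀ m, 1 ≤ m → m ≤ n → π m ∉ V) → π n ∉ A ∪ (F ∩ L) := by
    intro n
    induction n using Nat.strong_induction_on with
    | _ n IH =>
      intro hn1 hnoV
      -- the last restart point before n
      set S := {i | 1 ≤ i ∧ i < n ∧ π i ∈ F} with hS
      have hbdd : ∀ i ∈ S, i ≤ n := fun i hi => hi.2.1.le
      set r := sSup S with hrdef
      have hrn : r < n := by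
        by_cases hne : S.Nonempty
        · exact (Nat.sSup_mem hne ⟨n, hbdd⟩).2.1
        · rw [hrdef, Set.not_nonempty_iff_eq_empty.mp hne, csSup_empty]
          exact hn1
      have hrP : r = 0 ∨ (1 ≤ r ∧ π r ∈ F) := by
        by_cases hne : S.Nonempty
        · have := Nat.sSup_mem hne ⟨n, hbdd⟩
          exact Or.inr ⟨this.1, this.2.2⟩
        · left; rw [hrdef, Set.not_nonempty_iff_eq_empty.mp hne, csSup_empty]; rfl
      have hnoFseg : ∀ j, r < j → j < n → π j ∉ F := by
        intro j hj1 hj2 hjF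
        have hjS : j ∈ S := ⟨by omega, hj2, hjF⟩
        exact absurd (le_csSup ⟨n, hbdd⟩ hjS) (not_le.mpr hj1)
      have hxW : π r ∈ W := by
        rcases hrP with h | ⟨h1, h2⟩
        · exact hmemW r (Or.inl h)
        · have hr' := IH r hrn h1 (fun m hm1 hm2 => hnoV m hm1 (by omega))
          refine hmemW r (Or.inr ⟨h1, h2, fun hL' => hr' ?_⟩)
          exact Or.inr ⟨h2, hL'⟩
      by_contra hAn
      obtain ⟨τ', hwin', hag⟩ := seg_win G F false t π hp hc r (n - r) hrP
        (fun j hj1 hj2 => hnoFseg j hj1 (by omega)) (tleg (π r)) (twin (π r) hxW)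
      have hτn : τ' (n - r) = π n := by
        rw [hag (n - r) le_rfl]; congr 1; omega
      have hdisj := disj_VbAb hVA hFfree L
      simp only [EWinsPlay, WinsPlay, Bool.false_eq_true, if_true, if_false,
        ite_true, ite_false] at hwin'
      rcases hwin' with ⟨k, hk1, hkV, hkav⟩ | ⟨hav, _⟩
      · rcases lt_trichotomy k (n - r) with hlt | heq | hgt
        · rw [hag k hlt.le] at hkV
          rcases hkV with h | h
          · exact hnoV (r + k) (by omega) (by omega) h
          · exact hnoFseg (r + k) (by omega) (by omega) h.1
        · rw [heq, hτn] at hkV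
          exact Set.disjoint_left.mp hdisj hkV hAn
        · exact hkav (n - r) (by omega) hgt (hτn ▸ hAn)
      · exact hav (n - r) (by omega) (Set.mem_union_right _ (hτn ▸ hAn))
  -- final win analysis
  simp only [EWinsPlay, WinsPlay, Bool.false_eq_true, if_true, if_false,
    ite_true, ite_false]
  by_cases hT : ∃ n, 1 ≤ n ∧ π n ∈ V
  · have hm0mem : 1 ≤ sInf {n | 1 ≤ n ∧ π n ∈ V} ∧ π (sInf {n | 1 ≤ n ∧ π n ∈ V}) ∈ V :=
      Nat.sInf_mem hT
    refine Or.inl ⟨sInf {n | 1 ≤ n ∧ π n ∈ V}, hm0mem.1, hm0mem.2, ?_⟩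
    intro m h1 h2 hmA
    have hnoV : ∀ m', 1 ≤ m' → m' ≤ m → π m' ∉ V := by
      intro m' hm1 hm2 hm'V
      exact Nat.notMem_of_lt_sInf (s := {n | 1 ≤ n ∧ π n ∈ V}) (by omega) ⟨hm1, hm'V⟩
    exact INV m h1 hnoV (Set.mem_union_left _ hmA)
  · push_neg at hT
    have hT' : ∀ n, 1 ≤ n → π n ∉ V := fun n hn hV => hT n hn hV
    have hINVg : ∀ n, 1 ≤ n → π n ∉ A ∪ (F ∩ L) :=
      fun n hn => INV n hn (fun m h1 _ => hT' m h1)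
    have havoid : ∀ n, 1 ≤ n → π n ∉ V ∪ A := by
      rintro n hn (h | h)
      · exact hT' n hn h
      · exact hINVg n hn (Or.inl h)
    by_cases hFin : ∀ N, ∃ j, N < j ∧ π j ∈ F
    · refine Or.inr ⟨havoid, ?_⟩
      have hd_mem : d ∈ G.InfPrio π := by
        intro N
        obtain ⟨j, hj1, hj2⟩ := hFin N
        refine ⟨j, hj1.le, ?_⟩
        rw [hF] at hj2; exact hj2.2
      have hsinf : sInf (G.InfPrio π) = d := by
        refine le_antisymm (Nat.sInf_le hd_mem) (le_csInf ⟨d, hd_mem⟩ ?_)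
        intro c hc
        obtain ⟨n, hn1, hn2⟩ := hc 1
        rw [← hn2]; exact hmin _ (havoid n hn1)
      rw [hsinf]; exact hd
    · push_neg at hFin
      obtain ⟨N, hN⟩ := hFin
      set S := {i | 1 ≤ i ∧ π i ∈ F} with hS
      have hbdd : ∀ i ∈ S, i ≤ N := by
        intro i hi
        by_contra h
        exact hN i (by omega) hi.2
      set r := sSup S with hrdef
      have hrP : r = 0 ∨ (1 ≤ r ∧ π r ∈ F) := by
        by_cases hne : S.Nonempty
        · have := Nat.sSup_mem hne ⟨N, hbdd⟩
          exact Or.inr ⟨this.1, this.2⟩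
        · left; rw [hrdef, Set.not_nonempty_iff_eq_empty.mp hne, csSup_empty]; rfl
      have hnoF : ∀ j, r < j → π j ∉ F := by
        intro j hj hjF
        have hjS : j ∈ S := ⟨by omega, hjF⟩
        exact absurd (le_csSup ⟨N, hbdd⟩ hjS) (not_le.mpr hj)
      have hxW : π r ∈ W := by
        rcases hrP with h | ⟨h1, h2⟩
        · exact hmemW r (Or.inl h)
        · refine hmemW r (Or.inr ⟨h1, h2, fun hL' => hINVg r h1 ?_⟩)
          exact Or.inr ⟨h2, hL'⟩
      have htail := tail_win G F false t π hp hc r hrP hnoF (twin (π r) hxW)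
      simp only [EWinsPlay, WinsPlay, Bool.false_eq_true, if_true, if_false,
        ite_true, ite_false] at htail
      rcases htail with ⟨k, hk1, hkV, _⟩ | ⟨_, hw⟩
      · exfalso
        rcases hkV with h | h
        · exact hT' (r + k) (by omega) h
        · exact hnoF (r + k) (by omega) h.1
      · refine Or.inr ⟨havoid, ?_⟩
        have := (winsPlay_shift G false π r)
        simp only [WinsPlay, Bool.false_eq_true, if_true, if_false, ite_true, ite_false] at this
        exact this.mp hw

end APT
namespace APT
open ParityGame

variable {Q : Type}

lemma iterate_le_lfp (f : Set Q →o Set Q) : ∀ n, (⇑f)^[n] ∅ ⊆ OrderHom.lfp f := by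
  intro n
  induction n with
  | zero => simp
  | succ n ih =>
    rw [Function.iterate_succ_apply']
    calc f ((⇑f)^[n] ∅) ⊆ f (OrderHom.lfp f) := f.mono ih
    _ = OrderHom.lfp f := OrderHom.map_lfp f

lemma lfp_eq_iterate [Fintype Q] (f : Set Q →o Set Q) :
    ∃ N, OrderHom.lfp f = (⇑f)^[N] ∅ := by
  have hstep : ∀ n, (⇑f)^[n] (∅ : Set Q) ⊆ (⇑f)^[n+1] ∅ := by
    intro n
    induction n with
    | zero => simp
    | succ n ih =>
      rw [Function.iterate_succ_apply', Function.iterate_succ_apply']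
      exact f.mono ih
  obtain ⟨m, n, hne, heq⟩ :=
    Finite.exists_ne_map_eq_of_infinite (fun n : ℕ => (⇑f)^[n] (∅ : Set Q))
  have key : ∀ m n : ℕ, m < n → (⇑f)^[m] (∅:Set Q) = (⇑f)^[n] ∅ →
      ∃ N, OrderHom.lfp f = (⇑f)^[N] ∅ := by
    intro m n hmn heq
    have hmono : ∀ a b : ℕ, a ≤ b → (⇑f)^[a] (∅:Set Q) ⊆ (⇑f)^[b] ∅ :=
      fun a b hab => monotone_nat_of_le_succ hstep hab
    have hfix : (⇑f)^[m+1] (∅:Set Q) = (⇑f)^[m] ∅ := by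
      apply le_antisymm
      · rw [heq]; exact hmono (m+1) n hmn
      · exact hstep m
    refine ⟨m, le_antisymm ?_ (iterate_le_lfp f m)⟩
    apply OrderHom.lfp_le
    rw [← Function.iterate_succ_apply' f m ∅, hfix]
  rcases lt_or_gt_of_ne hne with h | h
  · exact key m n h heq
  · exact key n m h heq.symm

/-- Construction B: Player 1 wins the original game from the least fixed point,
by composing winning strategies of player 1 in the subgames, with strictly
decreasing rank at each restart. -/
lemma lemB (G : ParityGame Q) [Fintype Q] (V A : Set Q) (hVA : Disjoint V A)
    (d : ℕ) (hmin : ∀ q, q ∉ V ∪ A → d ≤ G.p q)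
    (F : Set Q) (hF : F = {q | q ∉ V ∪ A ∧ G.p q = d})
    (f : Set Q →o Set Q)
    (hf : ∀ Y, f Y = (G.EWinRegion false (V ∪ (F \ Y)) (A ∪ (F ∩ Y)))ᶜ)
    (hdet : ∀ Y : Set Q, (G.EWinRegion false (V ∪ (F \ Y)) (A ∪ (F ∩ Y)))ᶜ ⊆
      G.EWinRegion true (V ∪ (F \ Y)) (A ∪ (F ∩ Y))) :
    (OrderHom.lfp f : Set Q) ⊆ G.EWinRegion true V A := by
  classical
  set L := (OrderHom.lfp f : Set Q) with hL
  have hFfree : ∀ x ∈ F, x ∉ V ∪ A := by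
    intro x hx; rw [hF] at hx; exact hx.1
  obtain ⟨NN, hNN⟩ := lfp_eq_iterate f
  set rk : Q → ℕ := fun x => sInf {n | x ∈ (⇑f)^[n] ∅} with hrk
  have hrk_mem : ∀ x ∈ L, x ∈ (⇑f)^[rk x] ∅ := by
    intro x hx
    exact Nat.sInf_mem (⟨NN, show x ∈ (⇑f)^[NN] ∅ by rw [← hNN]; exact hx⟩ :
      {n | x ∈ (⇑f)^[n] ∅}.Nonempty)
  have hrk_pos : ∀ x ∈ L, 1 ≤ rk x := by
    intro x hx
    by_contra h
    have h0 : rk x = 0 := by omega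
    have := hrk_mem x hx
    rw [h0] at this
    simp at this
  have hrk_le : ∀ (x : Q) (k : ℕ), x ∈ (⇑f)^[k] ∅ → rk x ≤ k :=
    fun x k h => Nat.sInf_le h
  -- the strategy family
  have tdef : ∀ x : Q, ∃ σ, G.Legal true σ ∧ (x ∈ L → ∀ π, G.IsPlay π → π 0 = x →
      G.Consistent true σ π → G.EWinsPlay true (V ∪ (F \ ((⇑f)^[rk x - 1] ∅)))
        (A ∪ (F ∩ ((⇑f)^[rk x - 1] ∅))) π) := by
    intro x
    by_cases hx : x ∈ L
    · have hx1 : x ∈ (⇑f)^[rk x] ∅ := hrk_mem x hx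
      have hx2 : x ∈ f ((⇑f)^[rk x - 1] ∅) := by
        have heq : rk x = (rk x - 1) + 1 := by have := hrk_pos x hx; omega
        rw [heq, Function.iterate_succ_apply'] at hx1
        exact hx1
      rw [hf] at hx2
      obtain ⟨σ, h1, h2⟩ := hdet _ hx2
      exact ⟨σ, h1, fun _ => h2⟩
    · exact ⟨fun _ q => dflt G q, fun _ q _ => dflt_R G q, fun h => absurd h hx⟩
  choose t tleg twin using tdef
  intro q0 hq0
  refine ⟨compose F t, compose_legal G F true t tleg, ?_⟩
  intro π hp h0 hc
  -- base nodes are in L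
  set bse : ℕ → ℕ := fun n => sSup {i | 1 ≤ i ∧ i < n ∧ π i ∈ F} with hbse
  have hbse_facts : ∀ n, 1 ≤ n →
      (bse n = 0 ∨ (1 ≤ bse n ∧ π (bse n) ∈ F)) ∧ bse n < n ∧
      (∀ j, bse n < j → j < n → π j ∉ F) := by
    intro n hn1
    have hbdd : ∀ i ∈ {i | 1 ≤ i ∧ i < n ∧ π i ∈ F}, i ≤ n := fun i hi => hi.2.1.le
    refine ⟨?_, ?_, ?_⟩
    · by_cases hne : {i | 1 ≤ i ∧ i < n ∧ π i ∈ F}.Nonempty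
      · have := Nat.sSup_mem hne ⟨n, hbdd⟩
        exact Or.inr ⟨this.1, this.2.2⟩
      · left
        show sSup _ = 0
        rw [Set.not_nonempty_iff_eq_empty.mp hne, csSup_empty]; rfl
    · by_cases hne : {i | 1 ≤ i ∧ i < n ∧ π i ∈ F}.Nonempty
      · exact (Nat.sSup_mem hne ⟨n, hbdd⟩).2.1
      · show sSup _ < n
        rw [Set.not_nonempty_iff_eq_empty.mp hne, csSup_empty]
        exact hn1
    · intro j hj1 hj2 hjF
      have hjS : j ∈ {i | 1 ≤ i ∧ i < n ∧ π i ∈ F} := ⟨by omega, hj2, hjF⟩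
      exact absurd (le_csSup ⟨n, hbdd⟩ hjS) (not_le.mpr hj1)
  -- invariant
  have INV : ∀ n, 1 ≤ n → (∀ m, 1 ≤ m → m ≤ n → π m ∉ A) →
      π n ∉ V ∧ (π n ∈ F → π n ∈ (⇑f)^[rk (π (bse n)) - 1] ∅) := by
    intro n
    induction n using Nat.strong_induction_on with
    | _ n IH =>
      intro hn1 hnoA
      obtain ⟨hrP, hrn, hnoFseg⟩ := hbse_facts n hn1
      set r := bse n with hr
      have hxL : π r ∈ L := by
        rcases hrP with h | ⟨h1, h2⟩
        · rw [h, h0]; exact hq0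
        · have := (IH r hrn h1 (fun m hm1 hm2 => hnoA m hm1 (by omega))).2 h2
          exact iterate_le_lfp f _ this
      have hkey : π n ∉ V ∪ (F \ ((⇑f)^[rk (π r) - 1] ∅)) := by
        intro hcontra
        obtain ⟨τ', hwin', hag⟩ := seg_win G F true t π hp hc r (n - r) hrP
          (fun j hj1 hj2 => hnoFseg j hj1 (by omega)) (tleg (π r)) (twin (π r) hxL)
        have hτn : τ' (n - r) = π n := by
          rw [hag (n - r) le_rfl]; congr 1; omega
        have hdisj := disj_VbAb hVA hFfree ((⇑f)^[rk (π r) - 1] ∅)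
        simp only [EWinsPlay, WinsPlay, Bool.false_eq_true, if_true, if_false,
          ite_true, ite_false] at hwin'
        rcases hwin' with ⟨k, hk1, hkA, hkav⟩ | ⟨hav, _⟩
        · rcases lt_trichotomy k (n - r) with hlt | heq | hgt
          · rw [hag k hlt.le] at hkA
            rcases hkA with h | h
            · exact hnoA (r + k) (by omega) (by omega) h
            · exact hnoFseg (r + k) (by omega) (by omega) h.1
          · rw [heq, hτn] at hkA
            exact Set.disjoint_left.mp hdisj hcontra hkA
          · exact hkav (n - r) (by omega) hgt (hτn ▸ hcontra)
        · exact hav (n - r) (by omega) (Set.mem_union_left _ (hτn ▸ hcontra))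
      constructor
      · exact fun hV => hkey (Set.mem_union_left _ hV)
      · intro hnF
        by_contra hnot
        exact hkey (Set.mem_union_right _ ⟨hnF, hnot⟩)
  -- final win analysis
  simp only [EWinsPlay, WinsPlay, Bool.false_eq_true, if_true, if_false,
    ite_true, ite_false]
  by_cases hTA : ∃ n, 1 ≤ n ∧ π n ∈ A
  · have ha0 : 1 ≤ sInf {n | 1 ≤ n ∧ π n ∈ A} ∧ π (sInf {n | 1 ≤ n ∧ π n ∈ A}) ∈ A :=
      Nat.sInf_mem hTA
    refine Or.inl ⟨sInf {n | 1 ≤ n ∧ π n ∈ A}, ha0.1, ha0.2, ?_⟩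
    intro m h1 h2 hmV
    have hnoA : ∀ m', 1 ≤ m' → m' ≤ m → π m' ∉ A := by
      intro m' hm1 hm2 hm'A
      exact Nat.notMem_of_lt_sInf (s := {n | 1 ≤ n ∧ π n ∈ A}) (by omega) ⟨hm1, hm'A⟩
    exact (INV m h1 hnoA).1 hmV
  · push_neg at hTA
    have hnoA : ∀ n, 1 ≤ n → π n ∉ A := fun n hn hA => hTA n hn hA
    have hINVg : ∀ n, 1 ≤ n → π n ∉ V ∧ (π n ∈ F → π n ∈ (⇑f)^[rk (π (bse n)) - 1] ∅) :=
      fun n hn => INV n hn (fun m h1 _ => hnoA m h1)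
    have havoid : ∀ n, 1 ≤ n → π n ∉ V ∪ A := by
      rintro n hn (h | h)
      · exact (hINVg n hn).1 h
      · exact hnoA n hn h
    -- ranks strictly decrease along F-hits
    have hdec : ∀ n, ∀ i, 1 ≤ i → i < n → π i ∈ F → π n ∈ F → rk (π n) < rk (π i) := by
      intro n
      induction n using Nat.strong_induction_on with
      | _ n IH =>
        intro i hi1 hin hiF hnF
        have hn1 : 1 ≤ n := by omega
        obtain ⟨hrP, hrn, _⟩ := hbse_facts n hn1
        have hbdd : ∀ j ∈ {j | 1 ≤ j ∧ j < n ∧ π j ∈ F}, j ≤ n := fun j hj => hj.2.1.le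
        have hiS : i ∈ {j | 1 ≤ j ∧ j < n ∧ π j ∈ F} := ⟨hi1, hin, hiF⟩
        have hir : i ≤ bse n := le_csSup ⟨n, hbdd⟩ hiS
        have hrF : π (bse n) ∈ F := by
          rcases hrP with h | ⟨_, h2⟩
          · omega
          · exact h2
        have hr1 : 1 ≤ bse n := by omega
        have hrL : π (bse n) ∈ L := by
          have := (hINVg (bse n) hr1).2 hrF
          exact iterate_le_lfp f _ this
        have hlt : rk (π n) < rk (π (bse n)) := by
          have hmem := (hINVg n hn1).2 hnF
          have := hrk_le (π n) _ hmem
          have hpos := hrk_pos _ hrL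
          omega
        rcases eq_or_lt_of_le hir with heq | hlt2
        · rw [← heq] at hlt; exact hlt
        · exact lt_trans hlt (IH (bse n) hrn i hi1 hlt2 hiF hrF)
    -- finitely many F-hits
    have hfin : ∃ N, ∀ j, N < j → π j ∉ F := by
      by_contra hcon
      push_neg at hcon
      have hinf : ∀ N : ℕ, ∃ j, N < j ∧ π j ∈ F := hcon
      set g : ℕ → ℕ := fun k => Nat.rec ((hinf 0).choose) (fun _ prev => (hinf prev).choose) k
        with hg
      have hg0 : 0 < g 0 ∧ π (g 0) ∈ F := (hinf 0).choose_spec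
      have hgs : ∀ k, g k < g (k+1) ∧ π (g (k+1)) ∈ F := fun k => (hinf (g k)).choose_spec
      have hg1 : ∀ k, 1 ≤ g k ∧ π (g k) ∈ F := by
        intro k
        cases k with
        | zero => exact ⟨hg0.1, hg0.2⟩
        | succ k => exact ⟨by have h1 := (hgs k).1; have h2 := (hg0).1; omega, (hgs k).2⟩
      have hdecg : ∀ k, rk (π (g (k+1))) < rk (π (g k)) := fun k =>
        hdec (g (k+1)) (g k) (hg1 k).1 (hgs k).1 (hg1 k).2 (hg1 (k+1)).2
      have hdesc : ∀ k, rk (π (g k)) + k ≤ rk (π (g 0)) := by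
        intro k
        induction k with
        | zero => omega
        | succ k ih => have := hdecg k; omega
      have := hdesc (rk (π (g 0)) + 1)
      omega
    obtain ⟨N, hN⟩ := hfin
    have hbdd : ∀ i ∈ {i | 1 ≤ i ∧ π i ∈ F}, i ≤ N := by
      intro i hi
      by_contra h
      exact hN i (by omega) hi.2
    set r := sSup {i | 1 ≤ i ∧ π i ∈ F} with hrdef
    have hrP : r = 0 ∨ (1 ≤ r ∧ π r ∈ F) := by
      by_cases hne : {i | 1 ≤ i ∧ π i ∈ F}.Nonempty
      · have := Nat.sSup_mem hne ⟨N, hbdd⟩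
        exact Or.inr ⟨this.1, this.2⟩
      · left; rw [hrdef, Set.not_nonempty_iff_eq_empty.mp hne, csSup_empty]; rfl
    have hnoF : ∀ j, r < j → π j ∉ F := by
      intro j hj hjF
      have hjS : j ∈ {i | 1 ≤ i ∧ π i ∈ F} := ⟨by omega, hjF⟩
      exact absurd (le_csSup ⟨N, hbdd⟩ hjS) (not_le.mpr hj)
    have hxL : π r ∈ L := by
      rcases hrP with h | ⟨h1, h2⟩
      · rw [h, h0]; exact hq0
      · exact iterate_le_lfp f _ ((hINVg r h1).2 h2)
    have htail := tail_win G F true t π hp hc r hrP hnoF (twin (π r) hxL)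
    simp only [EWinsPlay, WinsPlay, Bool.false_eq_true, if_true, if_false,
      ite_true, ite_false] at htail
    rcases htail with ⟨k, hk1, hkA, _⟩ | ⟨_, hw⟩
    · exfalso
      rcases hkA with h | h
      · exact hnoA (r + k) (by omega) h
      · exact hnoF (r + k) (by omega) h.1
    · refine Or.inr ⟨havoid, ?_⟩
      have := (winsPlay_shift G true π r)
      simp only [WinsPlay, if_true, ite_true] at this
      exact this.mp hw

end APT
namespace APT
open ParityGame

attribute [local instance] Classical.propDecidable

variable {Q : Type}

/-- If player `i` can force the next node into their target, they win. -/
lemma reach1_win (G : ParityGame Q) (i : Bool) (V A : Set Q) (q : Q)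
    (h : (q ∈ G.nodes i ∧ ∃ q', q' ∈ (if i then A else V) ∧ G.R q q') ∨
         (q ∈ G.nodes (!i) ∧ ∀ q', G.R q q' → q' ∈ (if i then A else V))) :
    q ∈ G.EWinRegion i V A := by
  set T := (if i then A else V) with hT
  set σ : List Q → Q → Q := fun _ x =>
    if hx : ∃ x', x' ∈ T ∧ G.R x x' then hx.choose else dflt G x with hσ
  have hleg : G.Legal i σ := by
    intro h' x _
    by_cases hx : ∃ x', x' ∈ T ∧ G.R x x'
    · simp only [hσ, dif_pos hx]
      exact hx.choose_spec.2
    · simp only [hσ, dif_neg hx]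
      exact dflt_R G x
  refine ⟨σ, hleg, ?_⟩
  intro π hp h0 hcons
  have h1T : π 1 ∈ T := by
    rcases h with ⟨hn, hex⟩ | ⟨hn, hall⟩
    · have hstep := hcons 0 (by rw [h0]; exact hn)
      rw [hstep]
      have hex' : ∃ x', x' ∈ T ∧ G.R (π 0) x' := by rw [h0]; exact hex
      simp only [hσ, dif_pos hex']
      exact hex'.choose_spec.1
    · exact hall (π 1) (by rw [← h0] at *; exact hp 0)
  exact Or.inl ⟨1, le_rfl, h1T, fun m h1 h2 => absurd h2 (by omega)⟩

/-- Determinacy when there are no free nodes. -/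
lemma base_det (G : ParityGame Q) (V A : Set Q) (hVA : Disjoint V A)
    (hfull : ∀ q : Q, q ∈ V ∪ A) :
    ((G.EWinRegion false V A)ᶜ ⊆ G.EWinRegion true V A) ∧
    ((G.EWinRegion true V A)ᶜ ⊆ G.EWinRegion false V A) := by
  have hVA' : ∀ x : Q, x ∉ V → x ∈ A := by
    intro x hx
    rcases hfull x with h | h
    · exact absurd h hx
    · exact h
  have hAV' : ∀ x : Q, x ∉ A → x ∈ V := by
    intro x hx
    rcases hfull x with h | h
    · exact h
    · exact absurd h hx
  constructor
  · intro q hq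
    by_cases hq0 : q ∈ G.nodes false
    · by_cases hx : ∃ q', q' ∈ V ∧ G.R q q'
      · exact absurd (reach1_win G false V A q (Or.inl ⟨hq0, by simpa using hx⟩)) hq
      · push_neg at hx
        refine reach1_win G true V A q (Or.inr ⟨hq0, ?_⟩)
        intro q' hR
        simp only [if_pos rfl]
        exact hVA' q' (fun hV => hx q' hV hR)
    · have hq1 : q ∈ G.nodes true := mem_nodes_other G hq0
      by_cases hx : ∃ q', q' ∈ A ∧ G.R q q'
      · exact reach1_win G true V A q (Or.inl ⟨hq1, by simpa using hx⟩)
      · push_neg at hx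
        exfalso
        apply hq
        refine reach1_win G false V A q (Or.inr ⟨hq1, ?_⟩)
        intro q' hR
        simp only [Bool.false_eq_true, if_neg]
        exact hAV' q' (fun hA => hx q' hA hR)
  · intro q hq
    by_cases hq1 : q ∈ G.nodes true
    · by_cases hx : ∃ q', q' ∈ A ∧ G.R q q'
      · exact absurd (reach1_win G true V A q (Or.inl ⟨hq1, by simpa using hx⟩)) hq
      · push_neg at hx
        refine reach1_win G false V A q (Or.inr ⟨hq1, ?_⟩)
        intro q' hR
        simp only [Bool.false_eq_true, if_neg]
        exact hAV' q' (fun hA => hx q' hA hR)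
    · have hq0 : q ∈ G.nodes false := mem_nodes_other G hq1
      by_cases hx : ∃ q', q' ∈ V ∧ G.R q q'
      · exact reach1_win G false V A q (Or.inl ⟨hq0, by simpa using hx⟩)
      · push_neg at hx
        exfalso
        apply hq
        refine reach1_win G true V A q (Or.inr ⟨hq0, ?_⟩)
        intro q' hR
        simp only [if_pos rfl]
        exact hVA' q' (fun hV => hx q' hV hR)

/-- The dual game: swap players, shift priorities by one. -/
def dual (G : ParityGame Q) : ParityGame Q where
  Q0 := G.Q1
  Q1 := G.Q0
  disj := G.disj.symm
  covers := by rw [Set.union_comm]; exact G.covers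
  R := G.R
  total := G.total
  p := fun q => G.p q + 1

lemma dual_nodes (G : ParityGame Q) (i : Bool) : (dual G).nodes i = G.nodes (!i) := by
  cases i <;> rfl

lemma dual_legal (G : ParityGame Q) (i : Bool) (σ : List Q → Q → Q) :
    (dual G).Legal i σ ↔ G.Legal (!i) σ := by
  unfold Legal
  rw [dual_nodes]
  exact Iff.rfl

lemma dual_cons (G : ParityGame Q) (i : Bool) (σ : List Q → Q → Q) (π : ℕ → Q) :
    (dual G).Consistent i σ π ↔ G.Consistent (!i) σ π := by
  unfold Consistent
  rw [dual_nodes]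

lemma dual_infPrio (G : ParityGame Q) (π : ℕ → Q) :
    (dual G).InfPrio π = (fun c => c + 1) '' G.InfPrio π := by
  ext c
  simp only [InfPrio, Set.mem_image, Set.mem_setOf_eq]
  constructor
  · intro h
    obtain ⟨n, _, hc⟩ := h 0
    refine ⟨G.p (π n), fun N => ?_, hc⟩
    obtain ⟨m, hm, hcm⟩ := h N
    exact ⟨m, hm, by simp only [dual] at hcm hc ⊢; omega⟩
  · rintro ⟨c', hc', rfl⟩ N
    obtain ⟨n, hn, h⟩ := hc' N
    exact ⟨n, hn, by simp only [dual]; omega⟩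

lemma sInf_succ_image (s : Set ℕ) (hs : s.Nonempty) :
    sInf ((fun c => c + 1) '' s) = sInf s + 1 := by
  apply le_antisymm
  · exact Nat.sInf_le ⟨sInf s, Nat.sInf_mem hs, rfl⟩
  · obtain ⟨c', hc', heq⟩ := Nat.sInf_mem (hs.image (fun c => c + 1))
    rw [← heq]
    exact Nat.succ_le_succ (Nat.sInf_le hc')

lemma dual_winsPlay (G : ParityGame Q) [Fintype Q] (i : Bool) (π : ℕ → Q) :
    (dual G).WinsPlay i π ↔ G.WinsPlay (!i) π := by
  have hne := infPrio_nonempty G π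
  have h1 : sInf ((dual G).InfPrio π) = sInf (G.InfPrio π) + 1 := by
    rw [dual_infPrio, sInf_succ_image _ hne]
  cases i
  · simp only [WinsPlay, Bool.not_false, Bool.false_eq_true, ite_false, ite_true,
      if_true, if_false, h1, Nat.even_add_one, Nat.not_even_iff_odd]
  · simp only [WinsPlay, Bool.not_true, Bool.false_eq_true, ite_false, ite_true,
      if_true, if_false, h1, Nat.odd_add_one, Nat.not_odd_iff_even]

lemma dual_ewins (G : ParityGame Q) [Fintype Q] (i : Bool) (V A : Set Q) (π : ℕ → Q) :
    (dual G).EWinsPlay i A V π ↔ G.EWinsPlay (!i) V A π := by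
  have hw := dual_winsPlay G i π
  cases i
  · simp only [Bool.not_false] at hw
    simp only [EWinsPlay, Bool.not_false, Bool.false_eq_true, ite_false, ite_true,
      if_true, if_false]
    constructor <;> rintro (⟨n, h1, h2, h3⟩ | ⟨h4, h5⟩)
    · exact Or.inl ⟨n, h1, h2, h3⟩
    · exact Or.inr ⟨fun n hn hmem => h4 n hn (by rw [Set.union_comm]; exact hmem), hw.mp h5⟩
    · exact Or.inl ⟨n, h1, h2, h3⟩
    · exact Or.inr ⟨fun n hn hmem => h4 n hn (by rw [Set.union_comm]; exact hmem), hw.mpr h5⟩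
  · simp only [Bool.not_true] at hw
    simp only [EWinsPlay, Bool.not_true, Bool.false_eq_true, ite_false, ite_true,
      if_true, if_false]
    constructor <;> rintro (⟨n, h1, h2, h3⟩ | ⟨h4, h5⟩)
    · exact Or.inl ⟨n, h1, h2, h3⟩
    · exact Or.inr ⟨fun n hn hmem => h4 n hn (by rw [Set.union_comm]; exact hmem), hw.mp h5⟩
    · exact Or.inl ⟨n, h1, h2, h3⟩
    · exact Or.inr ⟨fun n hn hmem => h4 n hn (by rw [Set.union_comm]; exact hmem), hw.mpr h5⟩

lemma dual_region (G : ParityGame Q) [Fintype Q] (i : Bool) (V A : Set Q) :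
    (dual G).EWinRegion i A V = G.EWinRegion (!i) V A := by
  ext q
  simp only [EWinRegion, Set.mem_setOf_eq]
  constructor <;> rintro ⟨σ, hl, hwin⟩
  · refine ⟨σ, (dual_legal G i σ).mp hl, fun π h1 h2 h3 => ?_⟩
    exact (dual_ewins G i V A π).mp (hwin π h1 h2 ((dual_cons G i σ π).mpr h3))
  · refine ⟨σ, (dual_legal G i σ).mpr hl, fun π h1 h2 h3 => ?_⟩
    exact (dual_ewins G i V A π).mpr (hwin π h1 h2 ((dual_cons G i σ π).mp h3))

lemma union_VbAb2 (V A F Y : Set Q) : (V ∪ (F ∩ Y)) ∪ (A ∪ (F \ Y)) = V ∪ A ∪ F := by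
  ext x
  simp only [Set.mem_union, Set.mem_diff, Set.mem_inter_iff]
  tauto

lemma disj_VbAb2 {V A F : Set Q} (hVA : Disjoint V A) (hF : ∀ x ∈ F, x ∉ V ∪ A)
    (Y : Set Q) : Disjoint (V ∪ (F ∩ Y)) (A ∪ (F \ Y)) := by
  have := disj_VbAb hVA hF Yᶜ
  rwa [Set.diff_compl, ← Set.diff_eq] at this

/-- The even recursion step: determinacy of the current game from determinacy of
the subgames. -/
lemma evenStep (G : ParityGame Q) [Fintype Q] (V A : Set Q) (hVA : Disjoint V A)
    (d : ℕ) (hd : Even d) (hmin : ∀ q, q ∉ V ∪ A → d ≤ G.p q)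
    (F : Set Q) (hF : F = {q | q ∉ V ∪ A ∧ G.p q = d})
    (hdet : ∀ Y : Set Q, (G.EWinRegion false (V ∪ (F \ Y)) (A ∪ (F ∩ Y)))ᶜ ⊆
      G.EWinRegion true (V ∪ (F \ Y)) (A ∪ (F ∩ Y))) :
    ((G.EWinRegion false V A)ᶜ ⊆ G.EWinRegion true V A) ∧
    ((G.EWinRegion true V A)ᶜ ⊆ G.EWinRegion false V A) := by
  set f : Set Q →o Set Q :=
    ⟨fun Y => (G.EWinRegion false (V ∪ (F \ Y)) (A ∪ (F ∩ Y)))ᶜ, mono_f G V A F⟩ with hfdef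
  have hf : ∀ Y, f Y = (G.EWinRegion false (V ∪ (F \ Y)) (A ∪ (F ∩ Y)))ᶜ := fun Y => rfl
  have hA := lemA G V A hVA d hd hmin F hF f hf
  have hB := lemB G V A hVA d hmin F hF f hf hdet
  constructor
  · intro q hq
    by_cases hqL : q ∈ OrderHom.lfp f
    · exact hB hqL
    · exact absurd (hA hqL) hq
  · intro q hq
    by_cases hqL : q ∈ OrderHom.lfp f
    · exact absurd (hB hqL) hq
    · exact hA hqL

/-- Determinacy of extended parity games on finite arenas. -/
theorem master (G : ParityGame Q) [Fintype Q] :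
    ∀ (n : ℕ) (V A : Set Q), Disjoint V A → ((V ∪ A)ᶜ : Set Q).ncard ≤ n →
    ((G.EWinRegion false V A)ᶜ ⊆ G.EWinRegion true V A) ∧
    ((G.EWinRegion true V A)ᶜ ⊆ G.EWinRegion false V A) := by
  intro n
  induction n with
  | zero =>
    intro V A hVA hcard
    have hemp : ((V ∪ A)ᶜ : Set Q) = ∅ :=
      (Set.ncard_eq_zero (Set.toFinite _)).mp (Nat.le_zero.mp hcard)
    refine base_det G V A hVA (fun q => ?_)
    by_contra hq
    exact absurd (hemp ▸ (Set.mem_compl hq : q ∈ ((V ∪ A)ᶜ : Set Q))) (Set.notMem_empty q)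
  | succ n IH =>
    intro V A hVA hcard
    by_cases hfree : ((V ∪ A)ᶜ : Set Q) = ∅
    · refine base_det G V A hVA (fun q => ?_)
      by_contra hq
      exact absurd (hfree ▸ (Set.mem_compl hq : q ∈ ((V ∪ A)ᶜ : Set Q))) (Set.notMem_empty q)
    · have hne : ((V ∪ A)ᶜ : Set Q).Nonempty := Set.nonempty_iff_ne_empty.mpr hfree
      have hPne : (G.p '' ((V ∪ A)ᶜ : Set Q)).Nonempty := hne.image _
      set d := sInf (G.p '' ((V ∪ A)ᶜ : Set Q)) with hd
      obtain ⟨q0, hq0free, hq0p⟩ := Nat.sInf_mem hPne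
      have hmin : ∀ q, q ∉ V ∪ A → d ≤ G.p q := fun q hq => Nat.sInf_le ⟨q, hq, rfl⟩
      set F := {q | q ∉ V ∪ A ∧ G.p q = d} with hF
      have hq0F : q0 ∈ F := ⟨hq0free, hq0p⟩
      have hFfree : ∀ x ∈ F, x ∉ V ∪ A := fun x hx => hx.1
      have hsubcard : (((V ∪ A ∪ F)ᶜ : Set Q)).ncard ≤ n := by
        have h1 : ((V ∪ A ∪ F)ᶜ : Set Q) ⊆ ((V ∪ A)ᶜ : Set Q) :=
          Set.compl_subset_compl.mpr Set.subset_union_left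
        have hss : ((V ∪ A ∪ F)ᶜ : Set Q) ⊂ ((V ∪ A)ᶜ : Set Q) := by
          refine ⟨h1, fun hsup => ?_⟩
          exact (hsup hq0free) (Or.inr hq0F)
        have := Set.ncard_lt_ncard hss (Set.toFinite _)
        omega
      rcases Nat.even_or_odd d with hev | hodd
      · refine evenStep G V A hVA d hev hmin F hF (fun Y => ?_)
        refine (IH _ _ (disj_VbAb hVA hFfree Y) ?_).1
        rw [union_VbAb]
        exact hsubcard
      · have hd' : Even (d + 1) := Nat.even_add_one.mpr (Nat.not_even_iff_odd.mpr hodd)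
        have hmin' : ∀ q, q ∉ A ∪ V → d + 1 ≤ (dual G).p q := by
          intro q hq
          have h2 : d ≤ G.p q := hmin q (by rwa [Set.union_comm])
          show d + 1 ≤ G.p q + 1
          omega
        have hF' : F = {q | q ∉ A ∪ V ∧ (dual G).p q = d + 1} := by
          ext x
          simp only [hF, Set.mem_setOf_eq, Set.union_comm A V]
          show (x ∉ V ∪ A ∧ G.p x = d) ↔ (x ∉ V ∪ A ∧ G.p x + 1 = d + 1)
          constructor
          · rintro ⟨h1, h2⟩; exact ⟨h1, by omega⟩
          · rintro ⟨h1, h2⟩; exact ⟨h1, by omega⟩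
        have hdet' : ∀ Y : Set Q,
            ((dual G).EWinRegion false (A ∪ (F \ Y)) (V ∪ (F ∩ Y)))ᶜ ⊆
            (dual G).EWinRegion true (A ∪ (F \ Y)) (V ∪ (F ∩ Y)) := by
          intro Y
          rw [dual_region, dual_region]
          simp only [Bool.not_false, Bool.not_true]
          refine (IH (V ∪ (F ∩ Y)) (A ∪ (F \ Y)) (disj_VbAb2 hVA hFfree Y) ?_).2
          rw [union_VbAb2]
          exact hsubcard
        have hconcl := evenStep (dual G) A V hVA.symm (d + 1) hd' hmin' F hF' hdet'
        rw [dual_region, dual_region] at hconcl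
        simp only [Bool.not_false, Bool.not_true] at hconcl
        exact ⟨hconcl.2, hconcl.1⟩

end APT

/-- APT recursion, even case: if the minimal priority `d` of the free nodes is
even and `F` is the set of free nodes of priority `d` (the head of the parity
sequence), then Player 1's winning region of the extended parity game equals
`μY. (Q \ Win₀(α', V ∪ (F \ Y), A ∪ (F ∩ Y)))`. -/
theorem apt_even_head {Q : Type} [Fintype Q] (G : ParityGame Q)
    (V A : Set Q) (hVA : Disjoint V A) (d : ℕ) (hd : Even d)
    (hmin : ∀ q, q ∉ V ∪ A → d ≤ G.p q)
    (F : Set Q) (hF : F = {q | q ∉ V ∪ A ∧ G.p q = d})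
    (hmono : Monotone (fun Y : Set Q =>
      (G.EWinRegion false (V ∪ (F \ Y)) (A ∪ (F ∩ Y)))ᶜ)) :
    G.EWinRegion true V A =
      OrderHom.lfp ⟨fun Y : Set Q =>
        (G.EWinRegion false (V ∪ (F \ Y)) (A ∪ (F ∩ Y)))ᶜ, hmono⟩ := by
  set f : Set Q →o Set Q :=
    ⟨fun Y => (G.EWinRegion false (V ∪ (F \ Y)) (A ∪ (F ∩ Y)))ᶜ, hmono⟩ with hfdef
  have hf : ∀ Y, f Y = (G.EWinRegion false (V ∪ (F \ Y)) (A ∪ (F ∩ Y)))ᶜ := fun _ => rfl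
  have hFfree : ∀ x ∈ F, x ∉ V ∪ A := fun x hx => by rw [hF] at hx; exact hx.1
  have hdet : ∀ Y : Set Q, (G.EWinRegion false (V ∪ (F \ Y)) (A ∪ (F ∩ Y)))ᶜ ⊆
      G.EWinRegion true (V ∪ (F \ Y)) (A ∪ (F ∩ Y)) := fun Y =>
    (APT.master G ((((V ∪ (F \ Y)) ∪ (A ∪ (F ∩ Y)))ᶜ : Set Q)).ncard
      (V ∪ (F \ Y)) (A ∪ (F ∩ Y)) (APT.disj_VbAb hVA hFfree Y) le_rfl).1
  apply Set.Subset.antisymm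
  · intro q hq
    by_contra hqL
    exact APT.regions_not_both G hVA q (APT.lemA G V A hVA d hd hmin F hF f hf hqL) hq
  · exact APT.lemB G V A hVA d hmin F hF f hf hdet
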